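/- Let r ≥ 0 be an integer. For every integer n with n ≥ r, H_{n,λ}^{(r)} = Σ_{l=r+1}^{n+1} Σ_{l_1+···+l_{r+1}=l, each l_i ≥ 1} ((−λ)^{l−r−1}/(l_1!·l_2!···l_{r+1}!))·(1)_{l_1,1/λ}·(1)_{l_2,1/λ}···(1)_{l_{r+1},1/λ}, and for every integer n with 0 ≤ n < r, H_{n,λ}^{(r)} = 0. -/

import Mathlib

open Finset PowerSeries

/-- degenerate falling factorial `(x)_{n,λ}`; `dff 1 x n` is the ordinary falling factorial. -/
noncomputable def dff (lam x : ℝ) (n : ℕ) : ℝ := ∏ i ∈ Finset.range n, (x - (i : ℝ) * lam)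

/-- `(1)_{n,1/λ} = ∏_{i<n} (1 - i/λ)`. -/
noncomputable def oneFall (lam : ℝ) (n : ℕ) : ℝ := ∏ i ∈ Finset.range n, (1 - (i : ℝ) / lam)

/-- degenerate exponential `e_λ^x(t)` as a formal power series. -/
noncomputable def degExp (lam x : ℝ) : PowerSeries ℝ :=
  PowerSeries.mk fun n => dff lam x n / n.factorial

/-- `(1+t)^y = Σ_{n≥0} (y)_n t^n/n!`. -/
noncomputable def onePlus (y : ℝ) : PowerSeries ℝ :=
  PowerSeries.mk fun n => dff 1 y n / n.factorial

/-- `(1-t)^y = Σ_{n≥0} (y)_n (-1)^n t^n/n!`. -/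
noncomputable def oneMinus (y : ℝ) : PowerSeries ℝ :=
  PowerSeries.mk fun n => dff 1 y n * (-1) ^ n / n.factorial

/-- `log_λ(1+t) = Σ_{n≥1} λ^{n-1} (1)_{n,1/λ} t^n/n!`. -/
noncomputable def degLog (lam : ℝ) : PowerSeries ℝ :=
  PowerSeries.mk fun n => if n = 0 then 0 else lam ^ (n - 1) * oneFall lam n / n.factorial

/-- `log_λ(1-t) = Σ_{n≥1} λ^{n-1} (1)_{n,1/λ} (-1)^n t^n/n!`. -/
noncomputable def degLogNeg (lam : ℝ) : PowerSeries ℝ :=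
  PowerSeries.mk fun n =>
    if n = 0 then 0 else lam ^ (n - 1) * oneFall lam n * (-1) ^ n / n.factorial

/-- composition `f(g(t))` of formal power series (the usual composition when the
constant term of `g` is zero). -/
noncomputable def pcomp (f g : PowerSeries ℝ) : PowerSeries ℝ :=
  PowerSeries.mk fun n =>
    ∑ k ∈ Finset.range (n + 1), (PowerSeries.coeff k f) * (PowerSeries.coeff n (g ^ k))

lemma coeff_pow_tuple (φ : PowerSeries ℝ) (k n : ℕ) :
    PowerSeries.coeff n (φ ^ k) =
      ∑ f ∈ Finset.Nat.antidiagonalTuple k n, ∏ i, PowerSeries.coeff (f i) φ := by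
  rw [PowerSeries.coeff_pow]
  refine Finset.sum_nbij' (i := fun l => fun i : Fin k => l i)
    (j := fun f => Finsupp.onFinset (Finset.range k)
      (fun j => if h : j < k then f ⟨j, h⟩ else 0) (by
        intro j hj
        simp only [ne_eq, dite_eq_right_iff, not_forall] at hj
        obtain ⟨h, _⟩ := hj
        exact Finset.mem_range.2 h)) ?_ ?_ ?_ ?_ ?_
  · intro l hl
    rw [Finset.mem_finsuppAntidiag] at hl
    rw [Finset.Nat.mem_antidiagonalTuple]
    rw [← hl.1, Fin.sum_univ_eq_sum_range]
  · intro f hf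
    rw [Finset.Nat.mem_antidiagonalTuple] at hf
    rw [Finset.mem_finsuppAntidiag]
    refine ⟨?_, Finsupp.support_onFinset_subset⟩
    rw [← hf]
    rw [show ((Finset.range k).sum (Finsupp.onFinset (Finset.range k)
        (fun j => if h : j < k then f ⟨j, h⟩ else 0) _)) =
        ∑ j ∈ Finset.range k, (fun j => if h : j < k then f ⟨j, h⟩ else 0) j from rfl,
      ← Fin.sum_univ_eq_sum_range (fun j => if h : j < k then f ⟨j, h⟩ else 0) k]
    exact Finset.sum_congr rfl fun i _ => by simp [i.isLt]
  · intro l hl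
    rw [Finset.mem_finsuppAntidiag] at hl
    ext j
    simp only [Finsupp.onFinset_apply]
    split
    · rfl
    · next h =>
      by_contra hne
      exact h (Finset.mem_range.1 (hl.2 (Finsupp.mem_support_iff.2 (fun he => hne he.symm))))
  · intro f hf
    funext i
    simp [i.isLt]
  · intro l hl
    rw [Fin.prod_univ_eq_prod_range (fun i => PowerSeries.coeff (l i) φ)]

lemma dff_one_neg_one (m : ℕ) : dff 1 (-1) m = (-1 : ℝ) ^ m * m.factorial := by
  induction m with
  | zero => simp [dff]
  | succ k ih =>
    rw [dff, Finset.prod_range_succ, ← dff, ih, Nat.factorial_succ]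
    push_cast
    ring

lemma coeff_oneMinus_neg_one (m : ℕ) :
    PowerSeries.coeff m (oneMinus ((0:ℝ) - 1)) = 1 := by
  have h0 : ((0:ℝ) - 1) = -1 := by ring
  rw [h0, oneMinus, PowerSeries.coeff_mk, dff_one_neg_one]
  field_simp
  ring_nf
  rw [pow_mul']
  simp

lemma coeff_negdegLogNeg (lam : ℝ) (m : ℕ) (hm : 1 ≤ m) :
    PowerSeries.coeff m (- degLogNeg lam) =
      (-lam) ^ (m - 1) * oneFall lam m / m.factorial := by
  obtain ⟨k, rfl⟩ := Nat.exists_eq_add_of_le hm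
  rw [map_neg, degLogNeg, PowerSeries.coeff_mk, if_neg (by omega : ¬ (1 + k = 0))]
  have h1 : 1 + k - 1 = k := by omega
  rw [h1, show ((-1:ℝ))^(1+k) = -(-1:ℝ)^k from by rw [pow_add]; ring, neg_pow]
  ring


/-- Explicit expression for the degenerate harmonic numbers of order `r`:
`H_{n,λ}^{(r)} = Σ_{l=r+1}^{n+1} Σ_{l₁+⋯+l_{r+1}=l, lᵢ≥1}
  ((-λ)^{l-r-1}/(l₁!⋯l_{r+1}!)) (1)_{l₁,1/λ} ⋯ (1)_{l_{r+1},1/λ}` for `n ≥ r`,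
and `H_{n,λ}^{(r)} = 0` for `n < r`. -/
theorem stmt_16 (lam : ℝ) (hlam : lam ≠ 0)
    (Hp : ℕ → ℝ → ℕ → ℝ)
    (hHp : ∀ (r : ℕ) (x : ℝ), PowerSeries.X * PowerSeries.mk (fun n => Hp r x n) =
      (- degLogNeg lam) ^ (r + 1) * oneMinus (x - 1))
    (r : ℕ) :
    (∀ n : ℕ, r ≤ n → Hp r 0 n =
      ∑ l ∈ Finset.Icc (r + 1) (n + 1),
        ∑ f ∈ (Finset.Nat.antidiagonalTuple (r + 1) l).filter (fun f => ∀ i, 1 ≤ f i),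
          (-lam) ^ (l - (r + 1)) / (∏ i, ((f i).factorial : ℝ)) *
            ∏ i, oneFall lam (f i)) ∧
    (∀ n : ℕ, n < r → Hp r 0 n = 0) := by

  classical
  set g := - degLogNeg lam with hg
  -- coefficient of g^(r+1) as the filtered sum
  have hB : ∀ l : ℕ, PowerSeries.coeff l (g ^ (r + 1)) =
      ∑ f ∈ (Finset.Nat.antidiagonalTuple (r + 1) l).filter (fun f => ∀ i, 1 ≤ f i),
        (-lam) ^ (l - (r + 1)) / (∏ i, ((f i).factorial : ℝ)) *
          ∏ i, oneFall lam (f i) := by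
    intro l
    rw [coeff_pow_tuple, ← Finset.sum_filter_add_sum_filter_not _ (fun f => ∀ i, 1 ≤ f i)]
    have h2 : ∑ f ∈ (Finset.Nat.antidiagonalTuple (r + 1) l).filter
        (fun f => ¬ ∀ i, 1 ≤ f i), ∏ i, PowerSeries.coeff (f i) g = 0 := by
      refine Finset.sum_eq_zero fun f hf => ?_
      rw [Finset.mem_filter] at hf
      obtain ⟨i, hi⟩ := not_forall.1 hf.2
      refine Finset.prod_eq_zero (Finset.mem_univ i) ?_
      have : f i = 0 := by omega
      rw [this, hg, map_neg, degLogNeg, PowerSeries.coeff_mk]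
      simp
    rw [h2, add_zero]
    refine Finset.sum_congr rfl fun f hf => ?_
    rw [Finset.mem_filter, Finset.Nat.mem_antidiagonalTuple] at hf
    have hsum : ∑ i, f i = l := hf.1
    have hpos : ∀ i, 1 ≤ f i := hf.2
    have hcoeff : ∀ i : Fin (r + 1), PowerSeries.coeff (f i) g =
        (-lam) ^ (f i - 1) * oneFall lam (f i) / (f i).factorial :=
      fun i => coeff_negdegLogNeg lam (f i) (hpos i)
    rw [Finset.prod_congr rfl fun i _ => hcoeff i]
    rw [Finset.prod_div_distrib, Finset.prod_mul_distrib, Finset.prod_pow_eq_pow_sum]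
    have hexp : ∑ i, (f i - 1) = l - (r + 1) := by
      rw [Finset.sum_tsub_distrib _ fun i _ => hpos i, hsum]
      simp
    rw [hexp]
    ring
  -- main identity for every n
  have key : ∀ n : ℕ, Hp r 0 n =
      ∑ l ∈ Finset.Icc (r + 1) (n + 1),
        ∑ f ∈ (Finset.Nat.antidiagonalTuple (r + 1) l).filter (fun f => ∀ i, 1 ≤ f i),
          (-lam) ^ (l - (r + 1)) / (∏ i, ((f i).factorial : ℝ)) *
            ∏ i, oneFall lam (f i) := by
    intro n
    have h := congrArg (PowerSeries.coeff (n + 1)) (hHp r 0)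
    rw [PowerSeries.coeff_succ_X_mul, PowerSeries.coeff_mk, PowerSeries.coeff_mul] at h
    have h3 : ∑ p ∈ Finset.HasAntidiagonal.antidiagonal (n + 1),
        PowerSeries.coeff p.1 (g ^ (r + 1)) * PowerSeries.coeff p.2 (oneMinus ((0:ℝ) - 1)) =
        ∑ p ∈ Finset.HasAntidiagonal.antidiagonal (n + 1), PowerSeries.coeff p.1 (g ^ (r + 1)) := by
      refine Finset.sum_congr rfl fun p _ => ?_
      rw [coeff_oneMinus_neg_one, mul_one]
    rw [h3] at h
    rw [Finset.Nat.sum_antidiagonal_eq_sum_range_succ_mk] at h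
    rw [h]
    rw [Finset.sum_congr rfl fun l _ => hB l]
    refine (Finset.sum_subset ?_ ?_).symm
    · intro l hl
      rw [Finset.mem_Icc] at hl
      rw [Finset.mem_range]
      omega
    · intro l hl hnl
      rw [Finset.mem_range] at hl
      rw [Finset.mem_Icc] at hnl
      have hlt : l < r + 1 := by omega
      refine Finset.sum_eq_zero fun f hf => ?_
      rw [Finset.mem_filter, Finset.Nat.mem_antidiagonalTuple] at hf
      have : (r + 1 : ℕ) ≤ l := by
        calc (r + 1 : ℕ) = ∑ _i : Fin (r + 1), 1 := by simp
        _ ≤ ∑ i, f i := Finset.sum_le_sum fun i _ => hf.2 i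
        _ = l := hf.1
      omega
  exact ⟨fun n _ => key n, fun n hn => by
    rw [key n, Finset.Icc_eq_empty (by omega), Finset.sum_empty]⟩
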